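/- Let p > 1, Q the soliton of Q'' = Q - Q^p, and define u₃(x) = -(2/(p-1))[1 + ((p+1)/2) Q'(x) ∫_ε^x Q(r)^{-1} dr] for x < -ε < 0. Then u₃(x) → 1 as x → -∞. -/

import Mathlib

open Real Filter MeasureTheory intervalIntegral

lemma keylem (φ : ℝ → ℝ) (hc : Continuous φ) (hmono : Monotone φ)
    (hL : Tendsto φ atBot (nhds 1)) (b : ℝ) :
    Tendsto (fun x => exp x * ∫ r in x..b, exp (-r) * φ r) atBot (nhds 1) := by
  have hφ1 : ∀ r, 1 ≤ φ r := by
    intro r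
    refine le_of_tendsto hL ?_
    filter_upwards [eventually_le_atBot r] with x hx using hmono hx
  have hint : ∀ a c : ℝ, IntervalIntegrable (fun r => exp (-r) * φ r) volume a c := by
    intro a c
    exact (continuous_neg.rexp.mul hc).intervalIntegrable a c
  have hexp : ∀ a c : ℝ, (∫ r in a..c, exp (-r)) = exp (-a) - exp (-c) := by
    intro a c
    have h1 : (∫ r in a..c, exp (-r)) = ∫ r in (-c)..(-a), exp r := by
      simpa using intervalIntegral.integral_comp_neg (a := a) (b := c) (fun r => exp r)
    rw [h1, integral_exp]
  rw [Metric.tendsto_nhds]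
  intro η hη
  obtain ⟨y, hyb, hyφ⟩ : ∃ y, y ≤ b ∧ φ y < 1 + η / 2 := by
    have h1 : ∀ᶠ x in atBot, φ x < 1 + η / 2 :=
      hL.eventually_lt_const (by linarith)
    exact ((eventually_le_atBot b).and h1).exists
  set C : ℝ := ∫ r in y..b, exp (-r) * φ r with hC
  have hC0 : 0 ≤ C := by
    apply intervalIntegral.integral_nonneg hyb
    intro r _
    exact mul_nonneg (exp_pos _).le (zero_le_one.trans (hφ1 r))
  have hev1 : ∀ᶠ x in atBot, exp x * C < η / 2 := by
    have : Tendsto (fun x => exp x * C) atBot (nhds (0 * C)) :=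
      Real.tendsto_exp_atBot.mul_const C
    rw [zero_mul] at this
    exact this.eventually_lt_const (by linarith)
  have hev2 : ∀ᶠ x in atBot, exp x * exp (-b) < η := by
    have : Tendsto (fun x => exp x * exp (-b)) atBot (nhds (0 * exp (-b))) :=
      Real.tendsto_exp_atBot.mul_const _
    rw [zero_mul] at this
    exact this.eventually_lt_const (by linarith)
  filter_upwards [hev1, hev2, eventually_le_atBot y] with x h1 h2 hxy
  have hxb : x ≤ b := hxy.trans hyb
  have hsplit : (∫ r in x..b, exp (-r) * φ r)
      = (∫ r in x..y, exp (-r) * φ r) + C := by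
    rw [hC]
    exact (intervalIntegral.integral_add_adjacent_intervals (hint x y) (hint y b)).symm
  -- upper bound on the middle part
  have hup : (∫ r in x..y, exp (-r) * φ r) ≤ φ y * (exp (-x) - exp (-y)) := by
    have : (∫ r in x..y, exp (-r) * φ r) ≤ ∫ r in x..y, exp (-r) * φ y := by
      apply intervalIntegral.integral_mono_on hxy (hint x y)
      · exact (continuous_neg.rexp.mul continuous_const).intervalIntegrable x y
      · intro r hr
        have : φ r ≤ φ y := hmono hr.2
        have h0 : (0:ℝ) ≤ exp (-r) := (exp_pos _).le
        nlinarith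
    calc (∫ r in x..y, exp (-r) * φ r) ≤ ∫ r in x..y, exp (-r) * φ y := this
      _ = (∫ r in x..y, exp (-r)) * φ y := by rw [intervalIntegral.integral_mul_const]
      _ = φ y * (exp (-x) - exp (-y)) := by rw [hexp]; ring
  have hlo : exp (-x) - exp (-b) ≤ ∫ r in x..b, exp (-r) * φ r := by
    have : (∫ r in x..b, exp (-r)) ≤ ∫ r in x..b, exp (-r) * φ r := by
      apply intervalIntegral.integral_mono_on hxb
        (continuous_neg.rexp.intervalIntegrable x b) (hint x b)
      intro r _
      nlinarith [hφ1 r, (exp_pos (-r)).le, exp_pos (-r)]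
    rw [hexp] at this
    exact this
  have hex : exp x * exp (-x) = 1 := by
    rw [← Real.exp_add]; simp
  have hey : 0 < exp x * exp (-y) := by positivity
  have hφy1 : 1 ≤ φ y := hφ1 y
  have hepos : 0 < exp x := exp_pos x
  rw [Real.dist_eq, abs_lt]
  constructor
  · -- -η < value - 1
    have : exp x * (exp (-x) - exp (-b)) ≤ exp x * ∫ r in x..b, exp (-r) * φ r :=
      mul_le_mul_of_nonneg_left hlo hepos.le
    nlinarith
  · -- value - 1 < η
    have hub : exp x * ∫ r in x..b, exp (-r) * φ r
        ≤ exp x * (φ y * (exp (-x) - exp (-y))) + exp x * C := by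
      rw [hsplit, mul_add]
      have := mul_le_mul_of_nonneg_left hup hepos.le
      linarith
    have hkey : exp x * (φ y * (exp (-x) - exp (-y))) ≤ φ y := by
      have h3 : exp x * (φ y * (exp (-x) - exp (-y)))
          = φ y * (exp x * exp (-x)) - φ y * (exp x * exp (-y)) := by ring
      rw [hex] at h3
      nlinarith [mul_nonneg (zero_le_one.trans hφy1) hey.le]
    nlinarith

theorem stmt12 (p : ℝ) (hp : 1 < p) (Q : ℝ → ℝ)
    (hQdef : ∀ x, Q x = ((p + 1) / (2 * Real.cosh ((p - 1) * x / 2) ^ 2)) ^ (1 / (p - 1)))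
    (ε : ℝ) (hε : 0 < ε) :
    Tendsto (fun x =>
        -(2 / (p - 1)) * (1 + ((p + 1) / 2) * deriv Q x * ∫ r in (-ε)..x, (Q r)⁻¹))
      atBot (nhds 1) := by
  have hp1 : (0:ℝ) < p - 1 := by linarith
  set m : ℝ := 2 / (p - 1) with hm
  set B : ℝ := (2 * (p + 1)) ^ ((1:ℝ) / (p - 1)) with hB
  set h : ℝ → ℝ := fun x => (1 + exp ((p - 1) * x)) ^ m with hh
  have hBpos : 0 < B := Real.rpow_pos_of_pos (by linarith) _
  have hvpos : ∀ x : ℝ, 0 < 1 + exp ((p - 1) * x) := fun x => by positivity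
  have hhpos : ∀ x : ℝ, 0 < h x := fun x => Real.rpow_pos_of_pos (hvpos x) _
  -- rewrite Q
  have hQeq : ∀ x, Q x = B * exp x * (h x)⁻¹ := by
    intro x
    rw [hQdef x]
    have hz : Real.cosh ((p - 1) * x / 2) ^ 2
        = (1 + exp ((p - 1) * x)) ^ 2 / (4 * exp ((p - 1) * x)) := by
      have h4 : exp ((p - 1) * x / 2) * exp ((p - 1) * x / 2) = exp ((p - 1) * x) := by
        rw [← Real.exp_add]; ring_nf
      have hne := Real.exp_ne_zero ((p - 1) * x / 2)
      rw [Real.cosh_eq, Real.exp_neg, ← h4]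
      field_simp
      ring
    rw [hz]
    have h1 : (p + 1) / (2 * ((1 + exp ((p - 1) * x)) ^ 2 / (4 * exp ((p - 1) * x))))
        = 2 * (p + 1) * exp ((p - 1) * x) / (1 + exp ((p - 1) * x)) ^ 2 := by
      have := (hvpos x).ne'
      have := (Real.exp_pos ((p - 1) * x)).ne'
      field_simp
      ring
    rw [h1]
    rw [Real.div_rpow (by positivity) (by positivity)]
    rw [Real.mul_rpow (by positivity) (Real.exp_pos _).le]
    have h2 : exp ((p - 1) * x) ^ ((1:ℝ) / (p - 1)) = exp x := by
      rw [← Real.exp_mul]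
      field_simp
    have h3 : ((1 + exp ((p - 1) * x)) ^ 2) ^ ((1:ℝ) / (p - 1)) = h x := by
      rw [← Real.rpow_natCast (1 + exp ((p - 1) * x)) 2, ← Real.rpow_mul (hvpos x).le]
      have hexp2 : ((2:ℕ):ℝ) * ((1:ℝ) / (p - 1)) = m := by rw [hm]; push_cast; ring
      rw [hexp2]
    rw [h2, h3, div_eq_mul_inv]
  -- derivative
  have hderiv : ∀ x, HasDerivAt Q
      (Q x * ((1 - exp ((p - 1) * x)) / (1 + exp ((p - 1) * x)))) x := by
    intro x
    have hQfun : Q = fun x => B * exp x * ((1 + exp ((p - 1) * x)) ^ (-m)) := by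
      funext y
      rw [hQeq y, hh, Real.rpow_neg (hvpos y).le]
    rw [hQfun]
    have hlin : HasDerivAt (fun y : ℝ => (p - 1) * y) (p - 1) x := by
      simpa using (hasDerivAt_id x).const_mul (p - 1)
    have hu : HasDerivAt (fun y : ℝ => exp ((p - 1) * y))
        (exp ((p - 1) * x) * (p - 1)) x := hlin.exp
    have hv : HasDerivAt (fun y : ℝ => 1 + exp ((p - 1) * y))
        (exp ((p - 1) * x) * (p - 1)) x := hu.const_add 1
    have hw : HasDerivAt (fun y : ℝ => (1 + exp ((p - 1) * y)) ^ (-m))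
        (exp ((p - 1) * x) * (p - 1) * (-m) * (1 + exp ((p - 1) * x)) ^ (-m - 1)) x :=
      hv.rpow_const (Or.inl (hvpos x).ne')
    have hBe : HasDerivAt (fun y : ℝ => B * exp y) (B * exp x) x :=
      (Real.hasDerivAt_exp x).const_mul B
    have hD := hBe.mul hw
    convert hD using 1
    show B * exp x * (1 + exp ((p - 1) * x)) ^ (-m)
        * ((1 - exp ((p - 1) * x)) / (1 + exp ((p - 1) * x))) = _
    set u := exp ((p - 1) * x) with hu'
    set v := 1 + u with hv'
    have hvne : v ≠ 0 := (hvpos x).ne'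
    have e1 : v ^ (-m) = (h x)⁻¹ := by rw [hh, Real.rpow_neg (hvpos x).le]
    have e2 : v ^ (-m - 1) = (h x)⁻¹ * v⁻¹ := by
      rw [show -m - 1 = -m + (-1) by ring, Real.rpow_add (hvpos x), e1,
        Real.rpow_neg_one]
    rw [e1, e2]
    have hhne : h x ≠ 0 := (hhpos x).ne'
    rw [hm]
    field_simp
    ring
    all_goals rfl
  -- h properties
  have hu0 : Tendsto (fun x : ℝ => exp ((p - 1) * x)) atBot (nhds 0) := by
    apply Real.tendsto_exp_atBot.comp
    exact Tendsto.const_mul_atBot hp1 tendsto_id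
  have hcont : Continuous h := by
    apply Continuous.rpow_const
    · continuity
    · exact fun x => Or.inl (hvpos x).ne'
  have hmono : Monotone h := by
    intro a b hab
    apply Real.rpow_le_rpow (hvpos a).le _ (by positivity)
    have : exp ((p - 1) * a) ≤ exp ((p - 1) * b) := by
      apply Real.exp_le_exp.2
      nlinarith
    linarith
  have hh1 : Tendsto h atBot (nhds 1) := by
    have hbase : Tendsto (fun x : ℝ => 1 + exp ((p - 1) * x)) atBot (nhds 1) := by
      simpa using tendsto_const_nhds.add hu0
    have hc : ContinuousAt (fun y : ℝ => y ^ m) 1 :=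
      Real.continuousAt_rpow_const 1 m (Or.inl one_ne_zero)
    have := hc.tendsto.comp hbase
    rw [Real.one_rpow] at this; exact this
  -- main limit for the product
  have hkey := keylem h hcont hmono hh1 (-ε)
  have heq : ∀ x, deriv Q x * (∫ r in (-ε)..x, (Q r)⁻¹)
      = -(((1 - exp ((p - 1) * x)) / (1 + exp ((p - 1) * x))) * (h x)⁻¹
          * (exp x * ∫ r in x..(-ε), exp (-r) * h r)) := by
    intro x
    rw [(hderiv x).deriv]
    have hQinv : ∀ r, (Q r)⁻¹ = B⁻¹ * (exp (-r) * h r) := by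
      intro r
      rw [hQeq r, Real.exp_neg]
      rw [mul_inv, mul_inv, inv_inv]
      ring
    have hIeq : (∫ r in (-ε)..x, (Q r)⁻¹)
        = -(B⁻¹ * ∫ r in x..(-ε), exp (-r) * h r) := by
      rw [intervalIntegral.integral_symm]
      simp_rw [hQinv]
      rw [intervalIntegral.integral_const_mul]
    rw [hIeq, hQeq x]
    have hhne : h x ≠ 0 := (hhpos x).ne'
    field_simp
  have hTend : Tendsto (fun x => deriv Q x * ∫ r in (-ε)..x, (Q r)⁻¹)
      atBot (nhds (-1)) := by
    have t1 : Tendsto (fun x : ℝ => (1 - exp ((p - 1) * x)) / (1 + exp ((p - 1) * x)))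
        atBot (nhds 1) := by
      have hnum : Tendsto (fun x : ℝ => 1 - exp ((p - 1) * x)) atBot (nhds (1 - 0)) :=
        (tendsto_const_nhds (x := (1:ℝ))).sub hu0
      have hden : Tendsto (fun x : ℝ => 1 + exp ((p - 1) * x)) atBot (nhds (1 + 0)) :=
        (tendsto_const_nhds (x := (1:ℝ))).add hu0
      have := hnum.div hden (by norm_num)
      norm_num at this
      exact this
    have t2 : Tendsto (fun x => (h x)⁻¹) atBot (nhds 1) := by
      simpa using hh1.inv₀ one_ne_zero
    have := ((t1.mul t2).mul hkey).neg
    norm_num at this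
    simp_rw [heq]
    exact this.neg
  -- final algebra
  have hfinal := ((hTend.const_mul ((p + 1) / 2)).const_add 1).const_mul (-(2 / (p - 1)))
  have hval : -(2 / (p - 1)) * (1 + (p + 1) / 2 * (-1)) = 1 := by
    field_simp
    ring
  rw [hval] at hfinal
  simp_rw [← mul_assoc] at hfinal
  exact hfinal
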